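/- Fix $p \ge 1$, $q \in \{0,\dots,p-1\}$, $m \ge 1$, and real $\alpha \in (0,2)$. There is a constant $C$ such that for all $K \ge 1$ and $R \ge 2$ with $KR \ge (m+1)^p$: $\sum_{\substack{m < i_{q+1} < \cdots < i_p \\ i_{q+1}\cdots i_p > KR}} (i_{q+1} \cdots i_p)^{-2/\alpha} \le C\, (KR)^{1 - 2/\alpha}\, \big(\log (KR)\big)^{p-q-1}$. -/

import Mathlib

open Real ENNReal

namespace TailAux

noncomputable def F (s : ℝ) (k : ℕ) (T : ℝ) (i : Fin k → ℕ) : ℝ≥0∞ :=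
  if (∀ j, 2 ≤ i j) ∧ T < ∏ j, (i j : ℝ) then ENNReal.ofReal ((∏ j, (i j : ℝ)) ^ (-s)) else 0

noncomputable def S (s : ℝ) (k : ℕ) (T : ℝ) : ℝ≥0∞ := ∑' i : Fin k → ℕ, F s k T i

noncomputable def A (s : ℝ) : ℝ := ∑' n : ℕ, (n : ℝ) ^ (-s)

lemma step_ineq {s : ℝ} (hs : 1 < s) {a : ℕ} (ha : 2 ≤ a) :
    (s - 1) * (a : ℝ) ^ (-s) ≤ ((a : ℝ) - 1) ^ (1 - s) - (a : ℝ) ^ (1 - s) := by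
  have ha1 : (1 : ℝ) ≤ (a : ℝ) - 1 := by
    have : (2 : ℝ) ≤ (a : ℝ) := by exact_mod_cast ha
    linarith
  have hlt : (a : ℝ) - 1 < (a : ℝ) := by linarith
  obtain ⟨c, hc, hc'⟩ := exists_hasDerivAt_eq_slope (fun x => x ^ (1 - s))
    (fun x => (1 - s) * x ^ (1 - s - 1)) hlt
    (by
      apply ContinuousOn.rpow_const continuousOn_id
      intro x hx; left; simp only [Set.mem_Icc, id] at *; nlinarith)
    (fun x hx => Real.hasDerivAt_rpow_const (Or.inl (by simp at hx; nlinarith)))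
  have hcpos : 0 < c := by nlinarith [hc.1, hc.2]
  have hca : c ≤ (a : ℝ) := le_of_lt hc.2
  have key : ((a:ℝ) - 1) ^ (1 - s) - (a : ℝ) ^ (1 - s) = (s - 1) * c ^ (-s) := by
    have h1 : (a : ℝ) - ((a:ℝ) - 1) = 1 := by ring
    rw [h1, div_one] at hc'
    have : 1 - s - 1 = -s := by ring
    rw [this] at hc'
    linarith [hc']
  rw [key]
  have : (a : ℝ) ^ (-s) ≤ c ^ (-s) :=
    Real.rpow_le_rpow_of_nonpos hcpos hca (by linarith)
  nlinarith

lemma tail_tsum {s : ℝ} (hs : 1 < s) {T : ℝ} (hT : 1 ≤ T) :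
    ∑' a : ℕ, (if T < (a : ℝ) then ENNReal.ofReal ((a : ℝ) ^ (-s)) else 0)
      ≤ ENNReal.ofReal (2 ^ (s - 1) / (s - 1) * T ^ (1 - s)) := by
  set N := ⌊T⌋₊ with hN
  have hT0 : (0:ℝ) ≤ T := by linarith
  have hs1 : (0:ℝ) < s - 1 := by linarith
  have hinv : (0:ℝ) ≤ (s-1)⁻¹ := le_of_lt (inv_pos.mpr hs1)
  have hN1 : 1 ≤ N := Nat.one_le_iff_ne_zero.mpr (by
    simp [hN, Nat.floor_eq_zero]; linarith)
  have hstep : ∀ a : ℕ, T < (a : ℝ) → 2 ≤ a := by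
    intro a h
    have : (1:ℝ) < (a:ℝ) := lt_of_le_of_lt hT h
    exact_mod_cast Nat.succ_le_of_lt (by exact_mod_cast this)
  set ψ : ℕ → ℝ := fun a : ℕ =>
    if T < (a : ℝ) then (s-1)⁻¹ * (((a : ℝ) - 1) ^ (1 - s) - (a : ℝ) ^ (1 - s)) else 0 with hψ
  have hdiff : ∀ a : ℕ, 2 ≤ a → 0 ≤ ((a : ℝ) - 1) ^ (1 - s) - (a : ℝ) ^ (1 - s) := by
    intro a ha2
    have h1 := step_ineq hs ha2
    have hpos : 0 < (s-1) * (a:ℝ) ^ (-s) :=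
      _root_.mul_pos hs1 (Real.rpow_pos_of_pos (by positivity) _)
    linarith
  have hψ0 : ∀ a, 0 ≤ ψ a := by
    intro a
    simp only [hψ]
    split_ifs with h
    · exact mul_nonneg hinv (hdiff a (hstep a h))
    · exact le_refl 0
  rw [ENNReal.tsum_eq_iSup_sum]
  apply iSup_le
  intro t
  have hterm : ∀ a ∈ t, (if T < (a:ℝ) then ENNReal.ofReal ((a:ℝ)^(-s)) else 0)
      ≤ ENNReal.ofReal (ψ a) := by
    intro a _
    simp only [hψ]
    split_ifs with h
    · apply ENNReal.ofReal_le_ofReal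
      have h1 := step_ineq hs (hstep a h)
      have h3 := mul_le_mul_of_nonneg_left h1 hinv
      rwa [← mul_assoc, inv_mul_cancel₀ (ne_of_gt hs1), one_mul] at h3
    · simp
  calc ∑ a ∈ t, (if T < (a:ℝ) then ENNReal.ofReal ((a:ℝ)^(-s)) else 0)
      ≤ ∑ a ∈ t, ENNReal.ofReal (ψ a) := Finset.sum_le_sum hterm
    _ = ENNReal.ofReal (∑ a ∈ t, ψ a) := (ENNReal.ofReal_sum_of_nonneg (fun a _ => hψ0 a)).symm
    _ ≤ ENNReal.ofReal (2 ^ (s - 1) / (s - 1) * T ^ (1 - s)) := by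
        apply ENNReal.ofReal_le_ofReal
        set M := t.sup id with hM
        have hsubset : t.filter (fun a : ℕ => T < (a:ℝ)) ⊆ Finset.Icc (N+1) M := by
          intro a ha
          simp only [Finset.mem_filter] at ha
          rw [Finset.mem_Icc]
          constructor
          · have := (Nat.floor_lt hT0).mpr ha.2
            omega
          · exact Finset.le_sup (f := id) ha.1
        have h1 : ∑ a ∈ t, ψ a
            = ∑ a ∈ t.filter (fun a : ℕ => T < (a:ℝ)),
              (s-1)⁻¹ * (((a : ℝ) - 1) ^ (1 - s) - (a : ℝ) ^ (1 - s)) := by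
          rw [Finset.sum_filter]
        have h2 : ∑ a ∈ t.filter (fun a : ℕ => T < (a:ℝ)),
              (s-1)⁻¹ * (((a : ℝ) - 1) ^ (1 - s) - (a : ℝ) ^ (1 - s))
            ≤ ∑ a ∈ Finset.Icc (N+1) M,
              (s-1)⁻¹ * (((a : ℝ) - 1) ^ (1 - s) - (a : ℝ) ^ (1 - s)) := by
          apply Finset.sum_le_sum_of_subset_of_nonneg hsubset
          intro a ha _
          rw [Finset.mem_Icc] at ha
          exact mul_nonneg hinv (hdiff a (by omega))
        have h3 : ∑ a ∈ Finset.Icc (N+1) M,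
              (s-1)⁻¹ * (((a : ℝ) - 1) ^ (1 - s) - (a : ℝ) ^ (1 - s))
            ≤ (s-1)⁻¹ * (N:ℝ)^(1-s) := by
          rw [← Finset.mul_sum]
          apply mul_le_mul_of_nonneg_left _ hinv
          have hIcc : Finset.Icc (N+1) M = Finset.Ico (N+1) (M+1) := by
            rw [Finset.Ico_add_one_right_eq_Icc]
          rw [hIcc, Finset.sum_Ico_eq_sum_range]
          have hterm2 : ∀ i : ℕ, ((((N+1+i : ℕ)):ℝ) - 1) ^ (1 - s) - ((N+1+i : ℕ):ℝ) ^ (1 - s)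
              = (fun j => -(((N+j : ℕ):ℝ)^(1-s))) (i+1) - (fun j => -(((N+j : ℕ):ℝ)^(1-s))) i := by
            intro i
            have e1 : (((N+1+i : ℕ)):ℝ) - 1 = ((N+i : ℕ):ℝ) := by push_cast; ring
            rw [e1]
            have e2 : (N+1+i : ℕ) = (N+(i+1) : ℕ) := by omega
            rw [e2]
            ring
          calc ∑ i ∈ Finset.range (M + 1 - (N+1)),
                (((((N+1+i : ℕ)):ℝ) - 1) ^ (1 - s) - ((N+1+i : ℕ):ℝ) ^ (1 - s))
              = ∑ i ∈ Finset.range (M + 1 - (N+1)),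
                ((fun j => -(((N+j : ℕ):ℝ)^(1-s))) (i+1) - (fun j => -(((N+j : ℕ):ℝ)^(1-s))) i) :=
                Finset.sum_congr rfl (fun i _ => hterm2 i)
            _ = -(((N+(M + 1 - (N+1)) : ℕ):ℝ)^(1-s)) - (-(((N+0 : ℕ):ℝ)^(1-s))) :=
                Finset.sum_range_sub (fun j => -(((N+j : ℕ):ℝ)^(1-s))) _
            _ ≤ (N:ℝ)^(1-s) := by
                have h4 : (0:ℝ) ≤ ((N+(M + 1 - (N+1)) : ℕ):ℝ)^(1-s) :=
                  Real.rpow_nonneg (by positivity) _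
                simp only [Nat.add_zero]
                linarith
        have hTN : T / 2 ≤ (N:ℝ) := by
          rcases le_or_gt T 2 with h | h
          · have : (1:ℝ) ≤ (N:ℝ) := by exact_mod_cast hN1
            linarith
          · have h5 : T - 1 < (N:ℝ) := by
              rw [hN]; linarith [Nat.lt_floor_add_one T]
            linarith
        have h5 : (N:ℝ)^(1-s) ≤ (T/2)^(1-s) :=
          Real.rpow_le_rpow_of_nonpos (by linarith) hTN (by linarith)
        have h6 : (T/2)^(1-s) = 2^(s-1) * T^(1-s) := by
          rw [Real.div_rpow hT0 (by norm_num)]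
          have he : (1-s) = -(s-1) := by ring
          rw [he, Real.rpow_neg (by norm_num : (0:ℝ) ≤ 2)]
          field_simp
        calc ∑ a ∈ t, ψ a ≤ (s-1)⁻¹ * (N:ℝ)^(1-s) := by rw [h1]; exact le_trans h2 h3
          _ ≤ (s-1)⁻¹ * (2^(s-1) * T^(1-s)) := by
              apply mul_le_mul_of_nonneg_left _ hinv
              rw [← h6]; exact h5
          _ = 2 ^ (s - 1) / (s - 1) * T ^ (1 - s) := by ring

lemma F_cons (s : ℝ) (k : ℕ) (T : ℝ) (a : ℕ) (i : Fin k → ℕ) :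
    F s (k + 1) T (Fin.cons (α := fun _ => ℕ) a i) =
      (if 2 ≤ a then ENNReal.ofReal ((a : ℝ) ^ (-s)) else 0) * F s k (T / a) i := by
  have hprod : ∏ j : Fin (k+1), ((Fin.cons (α := fun _ => ℕ) a i j : ℕ) : ℝ) = (a : ℝ) * ∏ j, (i j : ℝ) := by
    have : (fun j : Fin (k+1) => ((Fin.cons (α := fun _ => ℕ) a i j : ℕ) : ℝ))
        = Fin.cons (a : ℝ) (fun j => (i j : ℝ)) := by
      funext j
      induction j using Fin.cases <;> simp
    rw [this, Fin.prod_cons]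
  have hforall : (∀ j : Fin (k+1), 2 ≤ Fin.cons (α := fun _ => ℕ) a i j) ↔ (2 ≤ a ∧ ∀ j : Fin k, 2 ≤ i j) := by
    rw [Fin.forall_fin_succ]
    simp
  by_cases h2a : 2 ≤ a
  · have ha0 : (0:ℝ) < (a:ℝ) := by positivity
    have hdiv : (T < (a:ℝ) * ∏ j, (i j : ℝ)) ↔ (T / (a:ℝ) < ∏ j, (i j : ℝ)) := by
      rw [div_lt_iff₀ ha0, mul_comm]
    by_cases hcond : (∀ j, 2 ≤ i j) ∧ T / (a:ℝ) < ∏ j, (i j : ℝ)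
    · rw [F, F, if_pos, if_pos hcond, if_pos h2a, hprod]
      · rw [Real.mul_rpow (le_of_lt ha0) (Finset.prod_nonneg (fun j _ => by positivity)),
          ENNReal.ofReal_mul (Real.rpow_nonneg (le_of_lt ha0) _)]
      · rw [hforall, hprod, hdiv]
        exact ⟨⟨h2a, hcond.1⟩, hcond.2⟩
    · rw [F, F, if_neg, if_neg hcond, mul_zero]
      rw [hforall, hprod, hdiv]
      rintro ⟨⟨-, h1⟩, h2⟩
      exact hcond ⟨h1, h2⟩
  · rw [F, if_neg, if_neg h2a, zero_mul]
    rw [hforall]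
    rintro ⟨⟨h1, -⟩, -⟩
    exact h2a h1

lemma cons_eq (s : ℝ) (k : ℕ) (T : ℝ) :
    S s (k + 1) T = ∑' a : ℕ,
      (if 2 ≤ a then ENNReal.ofReal ((a : ℝ) ^ (-s)) else 0) * S s k (T / a) := by
  rw [S, ← (Fin.consEquiv (fun _ : Fin (k+1) => ℕ)).tsum_eq (f := F s (k+1) T)]
  rw [ENNReal.tsum_prod']
  congr 1
  funext a
  have : ∀ i : Fin k → ℕ, F s (k+1) T ((Fin.consEquiv (fun _ : Fin (k+1) => ℕ)) (a, i))
      = (if 2 ≤ a then ENNReal.ofReal ((a : ℝ) ^ (-s)) else 0) * F s k (T / a) i := by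
    intro i
    exact F_cons s k T a i
  rw [tsum_congr this, ENNReal.tsum_mul_left]
  rfl

lemma A_nonneg (s : ℝ) : 0 ≤ A s :=
  tsum_nonneg (fun n => Real.rpow_nonneg (by positivity) _)

lemma wsum_le {s : ℝ} (hs : 1 < s) :
    ∑' a : ℕ, (if 2 ≤ a then ENNReal.ofReal ((a : ℝ) ^ (-s)) else 0)
      ≤ ENNReal.ofReal (A s) := by
  rw [A, ENNReal.ofReal_tsum_of_nonneg (fun n => Real.rpow_nonneg (by positivity) _)
    (Real.summable_nat_rpow.mpr (by linarith))]
  apply ENNReal.tsum_le_tsum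
  intro a
  split_ifs with h
  · exact le_refl _
  · exact zero_le

lemma S_le_pow {s : ℝ} (hs : 1 < s) (k : ℕ) (T : ℝ) :
    S s k T ≤ (ENNReal.ofReal (A s)) ^ k := by
  induction k generalizing T with
  | zero =>
    rw [S, pow_zero]
    have h1 : ∀ i : Fin 0 → ℕ, F s 0 T i ≤ 1 := by
      intro i
      rw [F]
      split_ifs with h
      · simp
      · exact zero_le
    calc ∑' i : Fin 0 → ℕ, F s 0 T i = F s 0 T default := tsum_eq_single default
          (fun b hb => absurd (Subsingleton.elim b default) hb)
      _ ≤ 1 := h1 default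
  | succ k ih =>
    rw [cons_eq]
    calc ∑' a : ℕ, (if 2 ≤ a then ENNReal.ofReal ((a : ℝ) ^ (-s)) else 0) * S s k (T / a)
        ≤ ∑' a : ℕ, (if 2 ≤ a then ENNReal.ofReal ((a : ℝ) ^ (-s)) else 0)
            * (ENNReal.ofReal (A s)) ^ k :=
          ENNReal.tsum_le_tsum (fun a => mul_le_mul_right (ih _) _)
      _ = (∑' a : ℕ, (if 2 ≤ a then ENNReal.ofReal ((a : ℝ) ^ (-s)) else 0))
            * (ENNReal.ofReal (A s)) ^ k := ENNReal.tsum_mul_right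
      _ ≤ ENNReal.ofReal (A s) * (ENNReal.ofReal (A s)) ^ k :=
          mul_le_mul_left (wsum_le hs) _
      _ = (ENNReal.ofReal (A s)) ^ (k + 1) := (pow_succ' _ _).symm

lemma harmonic_bound {T : ℝ} (hT : 1 ≤ T) :
    ∑' a : ℕ, (if 2 ≤ a ∧ (a : ℝ) ≤ T then ENNReal.ofReal (1 / (a : ℝ)) else 0)
      ≤ ENNReal.ofReal (1 + Real.log T) := by
  have hT0 : (0:ℝ) ≤ T := by linarith
  set N := ⌊T⌋₊ with hN
  have hzero : ∀ b ∉ Finset.Icc 2 N,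
      (if 2 ≤ b ∧ (b : ℝ) ≤ T then ENNReal.ofReal (1 / (b : ℝ)) else 0) = 0 := by
    intro b hb
    rw [if_neg]
    rintro ⟨h1, h2⟩
    exact hb (Finset.mem_Icc.mpr ⟨h1, Nat.le_floor h2⟩)
  rw [tsum_eq_sum hzero]
  have h1 : ∑ a ∈ Finset.Icc 2 N, (if 2 ≤ a ∧ (a : ℝ) ≤ T then ENNReal.ofReal (1 / (a : ℝ)) else 0)
      ≤ ∑ a ∈ Finset.Icc 2 N, ENNReal.ofReal (1 / (a : ℝ)) := by
    apply Finset.sum_le_sum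
    intro a _
    split_ifs
    · exact le_refl _
    · exact zero_le
  refine le_trans h1 ?_
  rw [← ENNReal.ofReal_sum_of_nonneg (fun a _ => by positivity)]
  apply ENNReal.ofReal_le_ofReal
  have h2 : ∑ a ∈ Finset.Icc 2 N, 1 / (a : ℝ) ≤ ∑ a ∈ Finset.Icc 1 N, 1 / (a : ℝ) := by
    apply Finset.sum_le_sum_of_subset_of_nonneg
    · apply Finset.Icc_subset_Icc_left; omega
    · intro a _ _; positivity
  have h3 : ∑ a ∈ Finset.Icc 1 N, 1 / (a : ℝ) = (harmonic N : ℝ) := by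
    rw [harmonic_eq_sum_Icc]
    push_cast
    simp [one_div]
  have h4 := harmonic_le_one_add_log N
  have h5 : Real.log N ≤ Real.log T := by
    rcases Nat.eq_zero_or_pos N with h | h
    · simp [h]; exact Real.log_nonneg hT
    · apply Real.log_le_log (by positivity)
      exact Nat.floor_le hT0
  linarith

lemma main_bound {s : ℝ} (hs : 1 < s) (k : ℕ) :
    ∃ C : ℝ, 0 < C ∧ ∀ T : ℝ, 1 ≤ T →
      S s (k + 1) T ≤ ENNReal.ofReal (C * T ^ (1 - s) * (1 + Real.log T) ^ k) := by
  have hs1 : (0:ℝ) < s - 1 := by linarith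
  have hCt : (0:ℝ) < 2 ^ (s - 1) / (s - 1) := div_pos (Real.rpow_pos_of_pos two_pos _) hs1
  induction k with
  | zero =>
    refine ⟨2 ^ (s - 1) / (s - 1), hCt, ?_⟩
    intro T hT
    have hT0 : (0:ℝ) < T := by linarith
    rw [cons_eq]
    have hpt : ∀ a : ℕ, (if 2 ≤ a then ENNReal.ofReal ((a : ℝ) ^ (-s)) else 0) * S s 0 (T / a)
        ≤ (if T < (a : ℝ) then ENNReal.ofReal ((a : ℝ) ^ (-s)) else 0) := by
      intro a
      by_cases h2a : 2 ≤ a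
      · have ha0 : (0:ℝ) < (a:ℝ) := by positivity
        have hS0 : S s 0 (T / a) ≤ if T < (a:ℝ) then 1 else 0 := by
          rw [S]
          rw [tsum_eq_single default (fun b hb => absurd (Subsingleton.elim b default) hb)]
          rw [F]
          have hprod : (∏ j : Fin 0, ((default : Fin 0 → ℕ) j : ℝ)) = 1 := by simp
          rw [hprod]
          have hiff : T / (a:ℝ) < 1 ↔ T < (a:ℝ) := by
            rw [div_lt_one ha0]
          split_ifs with h1 h2
          · simp
          · exact absurd (hiff.mp h1.2) h2
          · exact zero_le
          · exact le_refl _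
        calc (if 2 ≤ a then ENNReal.ofReal ((a : ℝ) ^ (-s)) else 0) * S s 0 (T / a)
            ≤ ENNReal.ofReal ((a : ℝ) ^ (-s)) * (if T < (a:ℝ) then 1 else 0) := by
              rw [if_pos h2a]; exact mul_le_mul_right hS0 _
          _ = (if T < (a : ℝ) then ENNReal.ofReal ((a : ℝ) ^ (-s)) else 0) := by
              split_ifs <;> simp
      · rw [if_neg h2a, zero_mul]
        exact zero_le
    calc ∑' a : ℕ, (if 2 ≤ a then ENNReal.ofReal ((a : ℝ) ^ (-s)) else 0) * S s 0 (T / a)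
        ≤ ∑' a : ℕ, (if T < (a : ℝ) then ENNReal.ofReal ((a : ℝ) ^ (-s)) else 0) :=
          ENNReal.tsum_le_tsum hpt
      _ ≤ ENNReal.ofReal (2 ^ (s - 1) / (s - 1) * T ^ (1 - s)) := tail_tsum hs hT
      _ = ENNReal.ofReal (2 ^ (s - 1) / (s - 1) * T ^ (1 - s) * (1 + Real.log T) ^ 0) := by
          rw [pow_zero, mul_one]
  | succ k ih =>
    obtain ⟨C, hC, hbound⟩ := ih
    set Ct := 2 ^ (s - 1) / (s - 1) with hCtdef
    have hA := A_nonneg s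
    refine ⟨C + (A s) ^ (k+1) * Ct + 1,
      by nlinarith [mul_nonneg (pow_nonneg hA (k+1)) (le_of_lt hCt)], ?_⟩
    intro T hT
    have hT0 : (0:ℝ) < T := by linarith
    have hlogT : (0:ℝ) ≤ Real.log T := Real.log_nonneg hT
    have hTS : (0:ℝ) ≤ T ^ (1-s) := Real.rpow_nonneg (le_of_lt hT0) _
    set g1 : ℕ → ℝ≥0∞ := fun a =>
      if 2 ≤ a ∧ (a : ℝ) ≤ T then
        ENNReal.ofReal (1 / (a:ℝ)) * ENNReal.ofReal (C * T ^ (1-s) * (1 + Real.log T) ^ k)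
      else 0 with hg1
    set g2 : ℕ → ℝ≥0∞ := fun a =>
      (if T < (a : ℝ) then ENNReal.ofReal ((a : ℝ) ^ (-s)) else 0)
        * ENNReal.ofReal ((A s) ^ (k+1)) with hg2
    have hpt : ∀ a : ℕ, (if 2 ≤ a then ENNReal.ofReal ((a : ℝ) ^ (-s)) else 0) * S s (k+1) (T / a)
        ≤ g1 a + g2 a := by
      intro a
      by_cases h2a : 2 ≤ a
      · have ha0 : (0:ℝ) < (a:ℝ) := by positivity
        have ha1 : (1:ℝ) ≤ (a:ℝ) := by
          have : (2:ℝ) ≤ (a:ℝ) := by exact_mod_cast h2a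
          linarith
        rcases le_or_gt (a:ℝ) T with haT | haT
        · -- use induction hypothesis
          have hTa1 : 1 ≤ T / a := (one_le_div ha0).mpr haT
          have h1 := hbound (T / a) hTa1
          have key : (a:ℝ) ^ (-s) * (C * (T/a) ^ (1-s) * (1 + Real.log (T/a)) ^ k)
              ≤ 1 / (a:ℝ) * (C * T ^ (1-s) * (1 + Real.log T) ^ k) := by
            have hkey : (a:ℝ) ^ (-s) * (T/a) ^ (1-s) = 1 / (a:ℝ) * T ^ (1-s) := by
              rw [Real.div_rpow (le_of_lt hT0) (le_of_lt ha0)]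
              rw [div_eq_mul_inv, ← Real.rpow_neg (le_of_lt ha0)]
              rw [← mul_assoc, mul_comm ((a:ℝ) ^ (-s)), mul_assoc, ← Real.rpow_add ha0]
              have : -s + -(1-s) = -1 := by ring
              rw [mul_comm, this, Real.rpow_neg_one, one_div, mul_comm]
            have hlog : (1 + Real.log (T/a)) ^ k ≤ (1 + Real.log T) ^ k := by
              apply pow_le_pow_left₀
              · have := Real.log_nonneg hTa1
                linarith
              · have h2 : Real.log (T/a) ≤ Real.log T := by
                  apply Real.log_le_log (by positivity)
                  rw [div_le_iff₀ ha0]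
                  nlinarith
                linarith
            calc (a:ℝ) ^ (-s) * (C * (T/a) ^ (1-s) * (1 + Real.log (T/a)) ^ k)
                = ((a:ℝ) ^ (-s) * (T/a) ^ (1-s)) * C * (1 + Real.log (T/a)) ^ k := by ring
              _ = (1 / (a:ℝ) * T ^ (1-s)) * C * (1 + Real.log (T/a)) ^ k := by rw [hkey]
              _ ≤ (1 / (a:ℝ) * T ^ (1-s)) * C * (1 + Real.log T) ^ k := by
                  apply mul_le_mul_of_nonneg_left hlog
                  positivity
              _ = 1 / (a:ℝ) * (C * T ^ (1-s) * (1 + Real.log T) ^ k) := by ring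
          calc (if 2 ≤ a then ENNReal.ofReal ((a : ℝ) ^ (-s)) else 0) * S s (k+1) (T / a)
              ≤ ENNReal.ofReal ((a : ℝ) ^ (-s))
                * ENNReal.ofReal (C * (T/a) ^ (1-s) * (1 + Real.log (T/a)) ^ k) := by
                rw [if_pos h2a]
                exact mul_le_mul_right h1 _
            _ = ENNReal.ofReal ((a:ℝ) ^ (-s) * (C * (T/a) ^ (1-s) * (1 + Real.log (T/a)) ^ k)) :=
                (ENNReal.ofReal_mul (Real.rpow_nonneg (le_of_lt ha0) _)).symm
            _ ≤ ENNReal.ofReal (1 / (a:ℝ) * (C * T ^ (1-s) * (1 + Real.log T) ^ k)) :=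
                ENNReal.ofReal_le_ofReal key
            _ = ENNReal.ofReal (1 / (a:ℝ)) * ENNReal.ofReal (C * T ^ (1-s) * (1 + Real.log T) ^ k) :=
                ENNReal.ofReal_mul (by positivity)
            _ = g1 a := by simp only [hg1]; rw [if_pos ⟨h2a, haT⟩]
            _ ≤ g1 a + g2 a := le_self_add
        · -- tail: use S_le_pow
          have h1 : S s (k+1) (T / a) ≤ ENNReal.ofReal ((A s) ^ (k+1)) := by
            rw [ENNReal.ofReal_pow (A_nonneg s)]
            exact S_le_pow hs (k+1) (T / a)
          calc (if 2 ≤ a then ENNReal.ofReal ((a : ℝ) ^ (-s)) else 0) * S s (k+1) (T / a)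
              ≤ (if T < (a:ℝ) then ENNReal.ofReal ((a : ℝ) ^ (-s)) else 0)
                * ENNReal.ofReal ((A s) ^ (k+1)) := by
                rw [if_pos h2a, if_pos haT]
                exact mul_le_mul_right h1 _
            _ = g2 a := by simp only [hg2]
            _ ≤ g1 a + g2 a := le_add_self
      · rw [if_neg h2a, zero_mul]
        exact zero_le
    rw [cons_eq]
    have hsum1 : ∑' a, g1 a ≤ ENNReal.ofReal ((1 + Real.log T) * (C * T ^ (1-s) * (1 + Real.log T) ^ k)) := by
      have : ∀ a : ℕ, g1 a = (if 2 ≤ a ∧ (a : ℝ) ≤ T then ENNReal.ofReal (1 / (a:ℝ)) else 0)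
          * ENNReal.ofReal (C * T ^ (1-s) * (1 + Real.log T) ^ k) := by
        intro a
        simp only [hg1]
        split_ifs with h
        · rfl
        · exact (zero_mul _).symm
      rw [tsum_congr this, ENNReal.tsum_mul_right]
      calc (∑' a : ℕ, if 2 ≤ a ∧ (a : ℝ) ≤ T then ENNReal.ofReal (1 / (a:ℝ)) else 0)
            * ENNReal.ofReal (C * T ^ (1-s) * (1 + Real.log T) ^ k)
          ≤ ENNReal.ofReal (1 + Real.log T)
            * ENNReal.ofReal (C * T ^ (1-s) * (1 + Real.log T) ^ k) :=
            mul_le_mul_left (harmonic_bound hT) _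
        _ = ENNReal.ofReal ((1 + Real.log T) * (C * T ^ (1-s) * (1 + Real.log T) ^ k)) :=
            (ENNReal.ofReal_mul (by linarith)).symm
    have hsum2 : ∑' a, g2 a ≤ ENNReal.ofReal (Ct * T ^ (1-s) * (A s) ^ (k+1)) := by
      simp only [hg2]
      rw [ENNReal.tsum_mul_right]
      calc (∑' a : ℕ, if T < (a:ℝ) then ENNReal.ofReal ((a:ℝ) ^ (-s)) else 0)
            * ENNReal.ofReal ((A s) ^ (k+1))
          ≤ ENNReal.ofReal (Ct * T ^ (1-s)) * ENNReal.ofReal ((A s) ^ (k+1)) :=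
            mul_le_mul_left (tail_tsum hs hT) _
        _ = ENNReal.ofReal (Ct * T ^ (1-s) * (A s) ^ (k+1)) :=
            (ENNReal.ofReal_mul (by positivity)).symm
    calc ∑' a : ℕ, (if 2 ≤ a then ENNReal.ofReal ((a : ℝ) ^ (-s)) else 0) * S s (k+1) (T / a)
        ≤ ∑' a : ℕ, (g1 a + g2 a) := ENNReal.tsum_le_tsum hpt
      _ = (∑' a, g1 a) + (∑' a, g2 a) := ENNReal.tsum_add
      _ ≤ ENNReal.ofReal ((1 + Real.log T) * (C * T ^ (1-s) * (1 + Real.log T) ^ k))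
          + ENNReal.ofReal (Ct * T ^ (1-s) * (A s) ^ (k+1)) := add_le_add hsum1 hsum2
      _ ≤ ENNReal.ofReal ((C + (A s) ^ (k+1) * Ct + 1) * T ^ (1-s) * (1 + Real.log T) ^ (k+1)) := by
          rw [← ENNReal.ofReal_add
            (mul_nonneg (by linarith) (by positivity))
            (mul_nonneg (mul_nonneg (le_of_lt hCt) hTS) (pow_nonneg hA (k+1)))]
          apply ENNReal.ofReal_le_ofReal
          have h1 : (1:ℝ) ≤ (1 + Real.log T) ^ (k+1) := one_le_pow₀ (by linarith)
          have e1 : (1 + Real.log T) * (C * T ^ (1-s) * (1 + Real.log T) ^ k)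
              = C * T ^ (1-s) * (1 + Real.log T) ^ (k+1) := by ring
          rw [e1]
          have hnn : (0:ℝ) ≤ (A s) ^ (k+1) * Ct * T ^ (1-s) :=
            mul_nonneg (mul_nonneg (pow_nonneg hA (k+1)) (le_of_lt hCt)) hTS
          have h2 : Ct * T ^ (1-s) * (A s) ^ (k+1)
              ≤ ((A s) ^ (k+1) * Ct + 1) * T ^ (1-s) * (1 + Real.log T) ^ (k+1) := by
            nlinarith [mul_le_mul_of_nonneg_left h1 hnn,
              mul_nonneg hTS (le_trans zero_le_one h1)]
          have e2 : (C + (A s) ^ (k+1) * Ct + 1) * T ^ (1-s) * (1 + Real.log T) ^ (k+1)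
              = C * T ^ (1-s) * (1 + Real.log T) ^ (k+1)
                + ((A s) ^ (k+1) * Ct + 1) * T ^ (1-s) * (1 + Real.log T) ^ (k+1) := by ring
          rw [e2]
          linarith [h2]
    done

end TailAux

/-- Tail estimate: the sum of `(i_{q+1}⋯i_p)^{-2/α}` over increasing tuples with
all components exceeding `m` and product exceeding `K·R` is at most
`C (KR)^{1-2/α} (log(KR))^{p-q-1}`. -/
theorem tail_sum_bound (p q m : ℕ) (hp : 1 ≤ p) (hq : q < p) (hm : 1 ≤ m)
    (α : ℝ) (hα0 : 0 < α) (hα2 : α < 2) :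
    ∃ C : ℝ, 0 < C ∧ ∀ K R : ℝ, 1 ≤ K → 2 ≤ R → ((m : ℝ) + 1) ^ p ≤ K * R →
      (Summable fun i : {i : Fin (p - q) → ℕ // StrictMono i ∧
          (∀ j, m < i j) ∧ K * R < ∏ j, (i j : ℝ)} =>
        (∏ j, ((i : Fin (p - q) → ℕ) j : ℝ)) ^ (-(2 / α))) ∧
      (∑' i : {i : Fin (p - q) → ℕ // StrictMono i ∧
          (∀ j, m < i j) ∧ K * R < ∏ j, (i j : ℝ)},
        (∏ j, ((i : Fin (p - q) → ℕ) j : ℝ)) ^ (-(2 / α)))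
        ≤ C * (K * R) ^ (1 - 2 / α) * (Real.log (K * R)) ^ (p - q - 1) := by
  have hs : 1 < 2 / α := by
    rw [lt_div_iff₀ hα0]; linarith
  obtain ⟨n', hn'⟩ : ∃ n', p - q = n' + 1 := ⟨p - q - 1, by omega⟩
  have hn'' : n' = p - q - 1 := by omega
  obtain ⟨C, hC, hbound⟩ := TailAux.main_bound hs n'
  have hlog2 : (0:ℝ) < Real.log 2 := Real.log_pos one_lt_two
  refine ⟨C * (1 + 1 / Real.log 2) ^ (p - q - 1), by positivity, ?_⟩
  intro K R hK hR _
  set T := K * R with hTdef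
  have hT2 : (2:ℝ) ≤ T := by nlinarith
  have hT1 : (1:ℝ) ≤ T := by linarith
  have hT0 : (0:ℝ) < T := by linarith
  have hST := hbound T hT1
  rw [← hn'] at hST
  -- the real-valued function
  set f : (Fin (p - q) → ℕ) → ℝ := fun i => (∏ j, (i j : ℝ)) ^ (-(2 / α)) with hf
  have hf0 : ∀ i, 0 ≤ f i := fun i =>
    Real.rpow_nonneg (Finset.prod_nonneg (fun j _ => by positivity)) _
  set P : Set (Fin (p - q) → ℕ) :=
    {i | StrictMono i ∧ (∀ j, m < i j) ∧ T < ∏ j, (i j : ℝ)} with hP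
  -- the ENNReal sum over the subtype is bounded by S
  have hsub : ∑' i : P, ENNReal.ofReal (f i) ≤ TailAux.S (2/α) (p - q) T := by
    rw [tsum_subtype P (fun i => ENNReal.ofReal (f i))]
    rw [TailAux.S]
    apply ENNReal.tsum_le_tsum
    intro i
    by_cases h : i ∈ P
    · rw [Set.indicator_of_mem h]
      have hcond : (∀ j, 2 ≤ i j) ∧ T < ∏ j, (i j : ℝ) :=
        ⟨fun j => by have := h.2.1 j; omega, h.2.2⟩
      rw [TailAux.F, if_pos hcond]
    · rw [Set.indicator_of_notMem h]
      exact zero_le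
  have hle : ∑' i : P, ENNReal.ofReal (f i)
      ≤ ENNReal.ofReal (C * T ^ (1 - 2/α) * (1 + Real.log T) ^ n') := le_trans hsub hST
  have hne : ∑' i : P, ENNReal.ofReal (f i) ≠ ⊤ :=
    (lt_of_le_of_lt hle ENNReal.ofReal_lt_top).ne
  have hsummable : Summable fun i : P => f i := by
    have h1 := ENNReal.summable_toReal hne
    apply h1.congr
    intro i
    exact ENNReal.toReal_ofReal (hf0 i)
  have hRHS0 : (0:ℝ) ≤ C * T ^ (1 - 2/α) * (1 + Real.log T) ^ n' := by
    have : (0:ℝ) ≤ Real.log T := Real.log_nonneg hT1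
    positivity
  have htsum : ∑' i : P, f i ≤ C * T ^ (1 - 2/α) * (1 + Real.log T) ^ n' := by
    have h1 : ∑' i : P, f i = (∑' i : P, ENNReal.ofReal (f i)).toReal := by
      rw [ENNReal.tsum_toReal_eq (fun i => ENNReal.ofReal_ne_top)]
      exact tsum_congr (fun i => (ENNReal.toReal_ofReal (hf0 i)).symm)
    rw [h1]
    calc (∑' i : P, ENNReal.ofReal (f i)).toReal
        ≤ (ENNReal.ofReal (C * T ^ (1 - 2/α) * (1 + Real.log T) ^ n')).toReal :=
          ENNReal.toReal_mono ENNReal.ofReal_ne_top hle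
      _ = C * T ^ (1 - 2/α) * (1 + Real.log T) ^ n' := ENNReal.toReal_ofReal hRHS0
  have hfinal : C * T ^ (1 - 2/α) * (1 + Real.log T) ^ n'
      ≤ C * (1 + 1 / Real.log 2) ^ (p - q - 1) * T ^ (1 - 2/α) * (Real.log T) ^ (p - q - 1) := by
    have hlogT : Real.log 2 ≤ Real.log T := Real.log_le_log two_pos hT2
    have hlogT0 : (0:ℝ) ≤ Real.log T := le_trans (le_of_lt hlog2) hlogT
    have h1 : 1 + Real.log T ≤ (1 + 1 / Real.log 2) * Real.log T := by
      have h2 : (1:ℝ) ≤ Real.log T / Real.log 2 := (one_le_div hlog2).mpr hlogT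
      have h3 : (1 + 1 / Real.log 2) * Real.log T = Real.log T + Real.log T / Real.log 2 := by
        field_simp
      rw [h3]
      linarith
    have h2 : (1 + Real.log T) ^ n' ≤ ((1 + 1 / Real.log 2) * Real.log T) ^ n' :=
      pow_le_pow_left₀ (by linarith) h1 n'
    rw [mul_pow] at h2
    rw [hn''] at h2 ⊢
    have hTS : (0:ℝ) ≤ T ^ (1 - 2/α) := Real.rpow_nonneg (le_of_lt hT0) _
    calc C * T ^ (1 - 2/α) * (1 + Real.log T) ^ (p - q - 1)
        ≤ C * T ^ (1 - 2/α) * ((1 + 1 / Real.log 2) ^ (p - q - 1) * (Real.log T) ^ (p - q - 1)) := by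
          apply mul_le_mul_of_nonneg_left h2 (by positivity)
      _ = C * (1 + 1 / Real.log 2) ^ (p - q - 1) * T ^ (1 - 2/α) * (Real.log T) ^ (p - q - 1) := by
          ring
  exact ⟨hsummable, le_trans htsum hfinal⟩
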